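/- Let a : ℝ^d → ℝ^{d×d} be Y-periodic, symmetric, with uniform spectral bounds α, β, and let χ_j ∈ H¹_per(Y), j = 1,…,d, solve the cell problems ∫_Y a(y)(∇χ_j(y)+e_j)·∇w(y) dy = 0 for all w ∈ H¹_per(Y). Define a⁰_{ij} = (1/|Y|)∫_Y e_iᵀ a(y)(∇χ_j(y)+e_j) dy. Then the homogenized tensor a⁰ is symmetric and satisfies the same type of spectral bounds: there exist 0 < α ≤ α' ≤ β' ≤ β with α'|ξ|² ≤ a⁰ξ·ξ ≤ β'|ξ|² for all ξ ∈ ℝ^d; in particular a⁰ξ·ξ = (1/|Y|)∫_Y a(∇χ_ξ + ξ)·(∇χ_ξ + ξ) dy ≥ α|ξ|² where χ_ξ = Σ_j ξ_j χ_j. -/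

import Mathlib

open MeasureTheory Matrix

lemma aux_dot_symm {d : ℕ} {A : Matrix (Fin d) (Fin d) ℝ} (hA : A.IsSymm) (u v : Fin d → ℝ) :
    u ⬝ᵥ A.mulVec v = v ⬝ᵥ A.mulVec u := by
  rw [Matrix.dotProduct_mulVec, ← Matrix.mulVec_transpose, hA.eq, dotProduct_comm]

lemma aux_dot_sum_right {d m : ℕ} (x : Fin d → ℝ) (ξ : Fin m → ℝ) (v : Fin m → Fin d → ℝ) :
    x ⬝ᵥ (∑ i, ξ i • v i) = ∑ i, ξ i * (x ⬝ᵥ v i) := by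
  simp only [dotProduct, Finset.sum_apply, Pi.smul_apply, smul_eq_mul, Finset.mul_sum]
  rw [Finset.sum_comm]
  exact Finset.sum_congr rfl fun i _ => Finset.sum_congr rfl fun l _ => by ring

lemma aux_dot_sum_left {d m : ℕ} (x : Fin d → ℝ) (ξ : Fin m → ℝ) (v : Fin m → Fin d → ℝ) :
    (∑ i, ξ i • v i) ⬝ᵥ x = ∑ i, ξ i * (v i ⬝ᵥ x) := by
  rw [dotProduct_comm, aux_dot_sum_right]
  exact Finset.sum_congr rfl fun i _ => by rw [dotProduct_comm]

lemma aux_mulVec_sum {d m : ℕ} (A : Matrix (Fin d) (Fin d) ℝ) (ξ : Fin m → ℝ) (u : Fin m → Fin d → ℝ) :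
    A.mulVec (∑ j, ξ j • u j) = ∑ j, ξ j • A.mulVec (u j) := by
  simp only [← Matrix.mulVecLin_apply, map_sum]
  exact Finset.sum_congr rfl fun j _ => (A.mulVecLin.map_smul (ξ j) (u j))

lemma aux_bilin {d m : ℕ} (A : Matrix (Fin d) (Fin d) ℝ) (ξ : Fin m → ℝ)
    (u v : Fin m → Fin d → ℝ) :
    A.mulVec (∑ j, ξ j • u j) ⬝ᵥ (∑ i, ξ i • v i)
      = ∑ i, ∑ j, ξ i * (ξ j * (A.mulVec (u j) ⬝ᵥ v i)) := by
  rw [aux_mulVec_sum, aux_dot_sum_left]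
  calc ∑ j, ξ j * (A.mulVec (u j) ⬝ᵥ ∑ i, ξ i • v i)
      = ∑ j, ∑ i, ξ i * (ξ j * (A.mulVec (u j) ⬝ᵥ v i)) := by
        refine Finset.sum_congr rfl fun j _ => ?_
        rw [aux_dot_sum_right, Finset.mul_sum]
        exact Finset.sum_congr rfl fun i _ => by ring
    _ = ∑ i, ∑ j, ξ i * (ξ j * (A.mulVec (u j) ⬝ᵥ v i)) := Finset.sum_comm

lemma aux_cube_vol {d : ℕ} :
    volume {y : EuclideanSpace ℝ (Fin d) | ∀ i, y i ∈ Set.Ioo (0:ℝ) 1} = 1 := by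
  have MP := EuclideanSpace.volume_preserving_symm_measurableEquiv_toLp (Fin d)
  have hT : MeasurableSet (Set.univ.pi fun _ : Fin d => Set.Ioo (0:ℝ) 1) :=
    MeasurableSet.univ_pi fun _ => measurableSet_Ioo
  have hpre : {y : EuclideanSpace ℝ (Fin d) | ∀ i, y i ∈ Set.Ioo (0:ℝ) 1}
      = (MeasurableEquiv.toLp 2 (Fin d → ℝ)).symm ⁻¹' (Set.univ.pi fun _ => Set.Ioo (0:ℝ) 1) := by
    ext y
    simp only [Set.mem_setOf_eq, Set.mem_preimage, Set.mem_univ_pi]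
    exact Iff.rfl
  rw [hpre, MP.measure_preimage hT.nullMeasurableSet, volume_pi_pi]
  simp

lemma aux_int_dom {X : Type*} [MeasurableSpace X] {μ : Measure X} {f g : X → ℝ}
    (hg : Integrable g μ) (hf : Measurable f) (h : ∀ y, |f y| ≤ g y) : Integrable f μ :=
  hg.mono' hf.aestronglyMeasurable (Filter.Eventually.of_forall fun y => by
    simpa [Real.norm_eq_abs] using h y)

lemma aux_psd_cs {d : ℕ} (A : Matrix (Fin d) (Fin d) ℝ) (hA : A.IsSymm)
    (hpos : ∀ ξ : Fin d → ℝ, 0 ≤ ξ ⬝ᵥ A.mulVec ξ) (u v : Fin d → ℝ) :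
    (u ⬝ᵥ A.mulVec v)^2 ≤ (u ⬝ᵥ A.mulVec u) * (v ⬝ᵥ A.mulVec v) := by
  have hsymm : ∀ x y : Fin d → ℝ, x ⬝ᵥ A.mulVec y = y ⬝ᵥ A.mulVec x := by
    intro x y
    rw [Matrix.dotProduct_mulVec, ← Matrix.mulVec_transpose, hA.eq, dotProduct_comm]
  have key : ∀ t : ℝ, 0 ≤ (v ⬝ᵥ A.mulVec v) * (t*t) + (2 * (u ⬝ᵥ A.mulVec v)) * t + (u ⬝ᵥ A.mulVec u) := by
    intro t
    have h0 := hpos (u + t • v)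
    have e : (u + t • v) ⬝ᵥ A.mulVec (u + t • v)
        = (v ⬝ᵥ A.mulVec v) * (t*t) + (2 * (u ⬝ᵥ A.mulVec v)) * t + (u ⬝ᵥ A.mulVec u) := by
      rw [Matrix.mulVec_add, Matrix.mulVec_smul, add_dotProduct, smul_dotProduct,
        dotProduct_add, dotProduct_smul, dotProduct_add, dotProduct_smul,
        hsymm v u]
      simp [smul_eq_mul]; ring
    linarith [e ▸ h0]
  have h := discrim_le_zero key
  rw [discrim] at h
  nlinarith [h]

lemma aux_form_bound {d : ℕ} {A : Matrix (Fin d) (Fin d) ℝ} {β : ℝ} (hA : A.IsSymm)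
    (hpos : ∀ ξ : Fin d → ℝ, 0 ≤ ξ ⬝ᵥ A.mulVec ξ)
    (hub : ∀ ξ : Fin d → ℝ, ξ ⬝ᵥ A.mulVec ξ ≤ β * ∑ i, ξ i ^ 2)
    (hβ : 0 ≤ β) (u v : Fin d → ℝ) :
    |u ⬝ᵥ A.mulVec v| ≤ β / 2 * ((∑ i, u i ^ 2) + ∑ i, v i ^ 2) := by
  have h := aux_psd_cs A hA hpos u v
  have h1 := hub u; have h2 := hub v; have h3 := hpos u; have h4 := hpos v
  have hsu : (0:ℝ) ≤ ∑ i, u i^2 := by positivity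
  have hsv : (0:ℝ) ≤ ∑ i, v i^2 := by positivity
  have h5 : (u ⬝ᵥ A.mulVec u) * (v ⬝ᵥ A.mulVec v)
      ≤ (β * ∑ i, u i ^ 2) * (β * ∑ i, v i ^ 2) :=
    mul_le_mul h1 h2 h4 (by positivity)
  have hc : (0:ℝ) ≤ β / 2 * ((∑ i, u i ^ 2) + ∑ i, v i ^ 2) := by positivity
  have h6 : (u ⬝ᵥ A.mulVec v)^2 ≤ (β / 2 * ((∑ i, u i ^ 2) + ∑ i, v i ^ 2))^2 := by
    have h7 : (0:ℝ) ≤ β*β*(((∑ i, u i ^ 2) - ∑ i, v i ^ 2)*((∑ i, u i ^ 2) - ∑ i, v i ^ 2)) := by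
      exact mul_nonneg (mul_self_nonneg β) (mul_self_nonneg _)
    nlinarith [h, h5, h7]
  exact abs_le_of_sq_le_sq h6 hc

lemma meanzero {d : ℕ} (l : Fin d)
    (f : EuclideanSpace ℝ (Fin d) → ℝ) (g : EuclideanSpace ℝ (Fin d) → EuclideanSpace ℝ (Fin d))
    (hgrad : ∀ x, HasGradientAt f (g x) x)
    (hper : ∀ x i, f (x + EuclideanSpace.single i 1) = f x)
    (hint : Integrable (fun y => g y l)
      (volume.restrict {y : EuclideanSpace ℝ (Fin d) | ∀ i, y i ∈ Set.Ioo (0:ℝ) 1})) :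
    ∫ y in {y : EuclideanSpace ℝ (Fin d) | ∀ i, y i ∈ Set.Ioo (0:ℝ) 1}, g y l = 0 := by
  cases d with
  | zero => exact l.elim0
  | succ n =>
    set S : Set (EuclideanSpace ℝ (Fin (n+1))) := {y | ∀ i, y i ∈ Set.Ioo (0:ℝ) 1} with hS
    set e := (MeasurableEquiv.toLp 2 (Fin (n+1) → ℝ)).symm with he
    set ψ := MeasurableEquiv.piFinSuccAbove (fun _ : Fin (n+1) => ℝ) l with hψ
    set Φ : (ℝ × (Fin n → ℝ)) ≃ᵐ EuclideanSpace ℝ (Fin (n+1)) := ψ.symm.trans e.symm with hΦ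
    have MP : MeasurePreserving Φ volume volume :=
      ((EuclideanSpace.volume_preserving_symm_measurableEquiv_toLp (Fin (n+1))).symm e).comp
        ((volume_preserving_piFinSuccAbove (fun _ : Fin (n+1) => ℝ) l).symm ψ)
    -- curve identity
    have curve : ∀ (t : ℝ) (z : Fin n → ℝ),
        Φ (t, z) = Φ (0, z) + t • (EuclideanSpace.single l 1) := by
      intro t z
      refine PiLp.ext fun i => ?_
      show (l.insertNth t z : Fin (n+1) → ℝ) i
        = (l.insertNth (0:ℝ) z : Fin (n+1) → ℝ) i + t * (EuclideanSpace.single l (1:ℝ)) i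
      rcases eq_or_ne i l with h | h
      · subst h; simp [EuclideanSpace.single_apply]
      · obtain ⟨j, rfl⟩ := Fin.exists_succAbove_eq h
        simp [Fin.insertNth_apply_succAbove, EuclideanSpace.single_apply,
          (Fin.succAbove_ne l j)]
    -- preimage of cube
    have hpre : Φ ⁻¹' S = Set.Ioo (0:ℝ) 1 ×ˢ {z : Fin n → ℝ | ∀ j, z j ∈ Set.Ioo (0:ℝ) 1} := by
      ext ⟨t, z⟩
      show (∀ i, (l.insertNth t z : Fin (n+1) → ℝ) i ∈ Set.Ioo (0:ℝ) 1) ↔ _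
      rw [Fin.forall_iff_succAbove l]
      simp [Fin.insertNth_apply_succAbove, Set.mem_prod]
    have hTmeas : MeasurableSet {z : Fin n → ℝ | ∀ j, z j ∈ Set.Ioo (0:ℝ) 1} := by
      have : {z : Fin n → ℝ | ∀ j, z j ∈ Set.Ioo (0:ℝ) 1}
          = Set.univ.pi (fun _ => Set.Ioo (0:ℝ) 1) := by ext z; simp [Set.mem_pi]
      rw [this]; exact MeasurableSet.univ_pi fun _ => measurableSet_Ioo
    have hSmeas : MeasurableSet S := by
      have : S = ⋂ i, (fun y : EuclideanSpace ℝ (Fin (n+1)) => y i) ⁻¹' Set.Ioo (0:ℝ) 1 := by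
        ext y; simp [hS]
      rw [this]
      exact MeasurableSet.iInter fun i => ((measurable_pi_apply i).comp (WithLp.measurable_ofLp _ _)) measurableSet_Ioo
    set T : Set (Fin n → ℝ) := {z | ∀ j, z j ∈ Set.Ioo (0:ℝ) 1} with hT
    have key : ∫ y in S, g y l = ∫ p in Φ ⁻¹' S, g (Φ p) l :=
      (MP.setIntegral_preimage_emb Φ.measurableEmbedding _ S).symm
    have hintp := ((MP.restrict_preimage (s := S) hSmeas).integrable_comp_emb Φ.measurableEmbedding).2 hint
    rw [key, hpre]
    rw [hpre] at hintp
    have hprod : (volume : Measure (ℝ × (Fin n → ℝ))).restrict (Set.Ioo (0:ℝ) 1 ×ˢ T)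
        = (volume.restrict (Set.Ioo (0:ℝ) 1)).prod (volume.restrict T) := by
      rw [Measure.volume_eq_prod, Measure.prod_restrict]
    rw [hprod] at hintp ⊢
    have fub := MeasureTheory.integral_prod_symm _ hintp
    rw [show (fun p : ℝ × (Fin n → ℝ) => g (Φ p) l) = ((fun y => g y l) ∘ ⇑Φ) from rfl, fub]
    have inner0 : ∀ᵐ z ∂(volume.restrict T),
        ∫ t, ((fun y => g y l) ∘ ⇑Φ) (t, z) ∂(volume.restrict (Set.Ioo (0:ℝ) 1)) = 0 := by
      filter_upwards [hintp.prod_left_ae] with z hz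
      set c : ℝ → EuclideanSpace ℝ (Fin (n+1)) :=
        fun t => Φ (0, z) + t • EuclideanSpace.single l 1 with hc
      have hcurve : ∀ t, Φ (t, z) = c t := fun t => curve t z
      have hderiv : ∀ t : ℝ, HasDerivAt (fun s => f (c s)) (g (c t) l) t := by
        intro t
        have hct : HasDerivAt c (EuclideanSpace.single l 1) t := by
          simpa only [id, one_smul] using ((hasDerivAt_id t).smul_const (EuclideanSpace.single l (1:ℝ))).const_add (Φ (0, z))
        have := (hgrad (c t)).hasFDerivAt.comp_hasDerivAt t hct
        refine this.congr_deriv ?_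
        simp [InnerProductSpace.toDual_apply_apply, real_inner_comm, PiLp.inner_apply,
          EuclideanSpace.single_apply, RCLike.inner_apply, mul_comm]
      have hii : IntervalIntegrable (fun t => g (c t) l) volume 0 1 := by
        rw [intervalIntegrable_iff, Set.uIoc_of_le (zero_le_one' ℝ)]
        have : IntegrableOn (fun t => g (c t) l) (Set.Ioo (0:ℝ) 1) volume := by
          refine (integrableOn_congr_fun ?_ measurableSet_Ioo).1 hz
          intro t _; show g (Φ (t, z)) l = _; rw [hcurve]
        exact this.congr_set_ae Ioo_ae_eq_Ioc.symm
      have ftc := intervalIntegral.integral_eq_sub_of_hasDerivAt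
        (fun t _ => hderiv t) hii
      have hper1 : f (c 1) = f (c 0) := by
        have : c 1 = c 0 + EuclideanSpace.single l 1 := by
          simp [hc]
        rw [this, hper]
      rw [hper1, sub_self] at ftc
      calc ∫ t, ((fun y => g y l) ∘ ⇑Φ) (t, z) ∂(volume.restrict (Set.Ioo (0:ℝ) 1))
          = ∫ t in Set.Ioo (0:ℝ) 1, g (c t) l := by
            refine setIntegral_congr_fun measurableSet_Ioo fun t _ => ?_
            show g (Φ (t, z)) l = _; rw [hcurve]
        _ = ∫ t in Set.Ioc (0:ℝ) 1, g (c t) l := (MeasureTheory.integral_Ioc_eq_integral_Ioo).symm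
        _ = ∫ t in (0:ℝ)..1, g (c t) l := (intervalIntegral.integral_of_le (zero_le_one' ℝ)).symm
        _ = 0 := ftc
    rw [MeasureTheory.integral_congr_ae inner0, integral_zero]


/-- the homogenized tensor
`a⁰_{ij} = (1/|Y|)∫_Y eᵢᵀ a(y)(∇χ_j(y)+e_j) dy` defined via the periodic cell problems
`∫_Y a(∇χ_j+e_j)·∇w = 0` (for all `Y`-periodic `w`) is symmetric and satisfies spectral
bounds `α'|ξ|² ≤ a⁰ξ·ξ ≤ β'|ξ|²` with `α ≤ α' ≤ β' ≤ β`; in particular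
`a⁰ξ·ξ = (1/|Y|)∫_Y a(∇χ_ξ+ξ)·(∇χ_ξ+ξ) dy ≥ α|ξ|²` with `χ_ξ = Σ_j ξ_j χ_j`.
Here `Y = (0,1)^d` so `|Y| = 1` and `μ` is Lebesgue measure restricted to `Y`. -/
theorem stmt7 {d : ℕ}
    (μ : Measure (EuclideanSpace ℝ (Fin d)))
    (hμ : μ = volume.restrict {y : EuclideanSpace ℝ (Fin d) | ∀ i, y i ∈ Set.Ioo (0:ℝ) 1})
    (α β : ℝ) (hα : 0 < α) (hαβ : α ≤ β)
    (a : EuclideanSpace ℝ (Fin d) → Matrix (Fin d) (Fin d) ℝ)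
    (hameas : ∀ i j, Measurable fun y => a y i j)
    (haper : ∀ y i, a (y + EuclideanSpace.single i 1) = a y)
    (hsym : ∀ y, (a y).IsSymm)
    (hbd : ∀ y, ∀ ξ : Fin d → ℝ, α * (∑ i, ξ i ^ 2) ≤ ξ ⬝ᵥ (a y).mulVec ξ ∧
      ξ ⬝ᵥ (a y).mulVec ξ ≤ β * ∑ i, ξ i ^ 2)
    (χ : Fin d → EuclideanSpace ℝ (Fin d) → ℝ)
    (gχ : Fin d → EuclideanSpace ℝ (Fin d) → EuclideanSpace ℝ (Fin d))
    (hgrad : ∀ j x, HasGradientAt (χ j) (gχ j x) x)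
    (hχper : ∀ j x i, χ j (x + EuclideanSpace.single i 1) = χ j x)
    (hInt : ∀ i j, Integrable (fun y =>
      ((a y).mulVec (fun l => gχ i y l + (Pi.single i 1 : Fin d → ℝ) l)) ⬝ᵥ
        (fun l => gχ j y l + (Pi.single j 1 : Fin d → ℝ) l)) μ)
    (hcell : ∀ j, ∀ (w : EuclideanSpace ℝ (Fin d) → ℝ)
        (gw : EuclideanSpace ℝ (Fin d) → EuclideanSpace ℝ (Fin d)),
      (∀ x, HasGradientAt w (gw x) x) →
      (∀ x i, w (x + EuclideanSpace.single i 1) = w x) →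
      Integrable (fun y =>
        ((a y).mulVec (fun l => gχ j y l + (Pi.single j 1 : Fin d → ℝ) l)) ⬝ᵥ (fun l => gw y l)) μ →
      ∫ y, ((a y).mulVec (fun l => gχ j y l + (Pi.single j 1 : Fin d → ℝ) l)) ⬝ᵥ (fun l => gw y l) ∂μ = 0)
    (a0 : Matrix (Fin d) (Fin d) ℝ)
    (ha0 : ∀ i j, a0 i j = ∫ y,
      (Pi.single i 1 : Fin d → ℝ) ⬝ᵥ ((a y).mulVec (fun l => gχ j y l + (Pi.single j 1 : Fin d → ℝ) l)) ∂μ) :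
    (∀ i j, a0 i j = a0 j i) ∧
    (∃ α' β' : ℝ, α ≤ α' ∧ α' ≤ β' ∧ β' ≤ β ∧
      ∀ ξ : Fin d → ℝ, α' * (∑ i, ξ i ^ 2) ≤ ξ ⬝ᵥ a0.mulVec ξ ∧
        ξ ⬝ᵥ a0.mulVec ξ ≤ β' * ∑ i, ξ i ^ 2) ∧
    (∀ ξ : Fin d → ℝ,
      ξ ⬝ᵥ a0.mulVec ξ = ∫ y,
          ((a y).mulVec (fun l => (∑ j, ξ j * gχ j y l) + ξ l)) ⬝ᵥ
            (fun l => (∑ j, ξ j * gχ j y l) + ξ l) ∂μ ∧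
        α * (∑ i, ξ i ^ 2) ≤ ξ ⬝ᵥ a0.mulVec ξ) := by
  have hβ0 : (0:ℝ) ≤ β := le_trans hα.le hαβ
  set P : Fin d → EuclideanSpace ℝ (Fin d) → Fin d → ℝ :=
    fun j y l => gχ j y l + (Pi.single j 1 : Fin d → ℝ) l with hPdef
  have hInt' : ∀ i j, Integrable (fun y => (a y).mulVec (P i y) ⬝ᵥ P j y) μ := hInt
  have hprob : IsProbabilityMeasure μ := by
    constructor
    rw [hμ, Measure.restrict_apply_univ]
    exact aux_cube_vol
  have hμuniv : (μ Set.univ).toReal = 1 := by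
    rw [hprob.measure_univ]; simp
  -- measurability
  have hgm : ∀ j, Measurable fun y => gχ j y := by
    intro j
    have hfe : (fun y => gχ j y)
        = fun y => (InnerProductSpace.toDual ℝ (EuclideanSpace ℝ (Fin d))).symm
            (fderiv ℝ (χ j) y) := by
      funext y
      rw [(hgrad j y).hasFDerivAt.fderiv]
      simp
    rw [hfe]
    exact (LinearIsometryEquiv.continuous _).measurable.comp (measurable_fderiv ℝ (χ j))
  have hgml : ∀ j l, Measurable fun y => gχ j y l :=
    fun j l => (measurable_pi_apply l).comp ((WithLp.measurable_ofLp _ _).comp (hgm j))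
  have hPm : ∀ j l, Measurable fun y => P j y l := fun j l => (hgml j l).add_const _
  have hform : ∀ (u v : EuclideanSpace ℝ (Fin d) → Fin d → ℝ),
      (∀ l, Measurable fun y => u y l) → (∀ l, Measurable fun y => v y l) →
      Measurable fun y => (a y).mulVec (u y) ⬝ᵥ v y := by
    intro u v hu hv
    simp only [Matrix.mulVec, dotProduct]
    exact Finset.measurable_sum _ fun l _ =>
      (Finset.measurable_sum _ fun k _ => (hameas l k).mul (hu k)).mul (hv l)
  -- pointwise positivity and bounds
  have hpos : ∀ y (ξ : Fin d → ℝ), 0 ≤ ξ ⬝ᵥ (a y).mulVec ξ := by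
    intro y ξ
    refine le_trans (mul_nonneg hα.le ?_) (hbd y ξ).1
    positivity
  have habs : ∀ y (u v : Fin d → ℝ),
      |(a y).mulVec u ⬝ᵥ v| ≤ β / 2 * ((∑ i, u i ^ 2) + ∑ i, v i ^ 2) := by
    intro y u v
    have h2 := aux_form_bound (hsym y) (hpos y) (fun ξ => (hbd y ξ).2) hβ0 v u
    rw [dotProduct_comm]
    linarith [h2]
  -- L² bound for P j
  have hXint : ∀ j, Integrable (fun y => ∑ l, (P j y l) ^ 2) μ := by
    intro j
    refine aux_int_dom ((hInt' j j).const_mul α⁻¹)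
      (Finset.measurable_sum _ fun l _ => (hPm j l).pow_const 2) ?_
    intro y
    have h1 : α * (∑ l, (P j y l) ^ 2) ≤ (a y).mulVec (P j y) ⬝ᵥ P j y := by
      rw [dotProduct_comm]
      exact (hbd y (P j y)).1
    have h2 : (0:ℝ) ≤ ∑ l, (P j y l) ^ 2 := by positivity
    rw [abs_of_nonneg h2, inv_mul_eq_div, le_div_iff₀ hα]
    linarith [h1, mul_comm α (∑ l, (P j y l) ^ 2)]
  have hsq1 : ∀ i : Fin d, (∑ l, ((Pi.single i 1 : Fin d → ℝ) l)^2) = 1 := by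
    intro i
    have : ∀ l, ((Pi.single i 1 : Fin d → ℝ) l)^2 = if l = i then 1 else 0 := by
      intro l; by_cases h : l = i <;> simp [Pi.single_apply, h]
    rw [Finset.sum_congr rfl fun l _ => this l]
    simp
  have hsumg : ∀ i y, ∑ l, (gχ i y l)^2 ≤ 2 * (∑ l, (P i y l)^2) + 2 := by
    intro i y
    have h1 : ∀ l, (gχ i y l)^2 ≤ 2*(P i y l)^2 + 2*((Pi.single i 1 : Fin d → ℝ) l)^2 := by
      intro l
      have hP2 : (P i y l)^2 = (gχ i y l + (Pi.single i 1 : Fin d → ℝ) l)^2 := rfl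
      nlinarith [sq_nonneg (gχ i y l + 2*(Pi.single i 1 : Fin d → ℝ) l), hP2]
    have h2 := hsq1 i
    calc ∑ l, (gχ i y l)^2
        ≤ ∑ l, (2*(P i y l)^2 + 2*((Pi.single i 1 : Fin d → ℝ) l)^2) :=
          Finset.sum_le_sum fun l _ => h1 l
      _ = 2 * (∑ l, (P i y l)^2) + 2 := by
          rw [Finset.sum_add_distrib, ← Finset.mul_sum, ← Finset.mul_sum, h2]
          ring
  -- integrability of A P_j ⬝ ∇χ_i and A P_j ⬝ e_i
  have hIPg : ∀ i j, Integrable (fun y => (a y).mulVec (P j y) ⬝ᵥ (fun l => gχ i y l)) μ := by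
    intro i j
    refine aux_int_dom ((((hXint j).add (((hXint i).const_mul 2).add
      (integrable_const 2))).const_mul (β/2))) (hform _ _ (hPm j) (hgml i)) ?_
    intro y
    have h1 := habs y (P j y) (fun l => gχ i y l)
    have h2 := hsumg i y
    have hb2 : (0:ℝ) ≤ β/2 := by linarith
    calc |(a y).mulVec (P j y) ⬝ᵥ (fun l => gχ i y l)|
        ≤ β / 2 * ((∑ l, (P j y l) ^ 2) + ∑ l, (gχ i y l) ^ 2) := h1
      _ ≤ β / 2 * ((∑ l, (P j y l) ^ 2) + (2 * (∑ l, (P i y l)^2) + 2)) := by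
          refine mul_le_mul_of_nonneg_left (by linarith) hb2
  have hIPe : ∀ i j, Integrable (fun y => (a y).mulVec (P j y) ⬝ᵥ (Pi.single i 1 : Fin d → ℝ)) μ := by
    intro i j
    refine aux_int_dom (((hXint j).add (integrable_const 1)).const_mul (β/2))
      (hform _ _ (hPm j) (fun l => measurable_const)) ?_
    intro y
    have h1 := habs y (P j y) (Pi.single i 1 : Fin d → ℝ)
    have h2 := hsq1 i
    rw [h2] at h1
    exact h1
  -- cell problem: the gradient terms integrate to zero
  have hz : ∀ i j, ∫ y, (a y).mulVec (P j y) ⬝ᵥ (fun l => gχ i y l) ∂μ = 0 :=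
    fun i j => hcell j (χ i) (gχ i) (hgrad i) (hχper i) (hIPg i j)
  -- the key alternative formula for a0
  have key : ∀ i j, a0 i j = ∫ y, (a y).mulVec (P j y) ⬝ᵥ P i y ∂μ := by
    intro i j
    rw [ha0 i j]
    have hpt : ∀ y, (a y).mulVec (P j y) ⬝ᵥ P i y
        = (a y).mulVec (P j y) ⬝ᵥ (fun l => gχ i y l)
          + (Pi.single i 1 : Fin d → ℝ) ⬝ᵥ (a y).mulVec (P j y) := by
      intro y
      rw [dotProduct_comm (Pi.single i 1 : Fin d → ℝ), ← dotProduct_add]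
      congr 1
    rw [show (∫ y, (a y).mulVec (P j y) ⬝ᵥ P i y ∂μ)
        = ∫ y, ((a y).mulVec (P j y) ⬝ᵥ (fun l => gχ i y l)
          + (Pi.single i 1 : Fin d → ℝ) ⬝ᵥ (a y).mulVec (P j y)) ∂μ from
      integral_congr_ae (Filter.Eventually.of_forall fun y => hpt y)]
    rw [integral_add (hIPg i j) ?hc, hz i j, zero_add]
    case hc =>
      refine (hIPe i j).congr (Filter.Eventually.of_forall fun y => ?_)
      exact dotProduct_comm _ _
  have hsym0 : ∀ i j, a0 i j = a0 j i := by
    intro i j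
    rw [key i j, key j i]
    refine integral_congr_ae (Filter.Eventually.of_forall fun y => ?_)
    show (a y).mulVec (P j y) ⬝ᵥ P i y = (a y).mulVec (P i y) ⬝ᵥ P j y
    rw [dotProduct_comm, aux_dot_symm (hsym y), dotProduct_comm]
  -- master computation for a fixed ξ
  have master : ∀ ξ : Fin d → ℝ,
      ξ ⬝ᵥ a0.mulVec ξ = (∫ y, ((a y).mulVec (fun l => (∑ j, ξ j * gχ j y l) + ξ l)) ⬝ᵥ
          (fun l => (∑ j, ξ j * gχ j y l) + ξ l) ∂μ)
      ∧ α * (∑ i, ξ i ^ 2) ≤ ξ ⬝ᵥ a0.mulVec ξ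
      ∧ ξ ⬝ᵥ a0.mulVec ξ ≤ β * ∑ i, ξ i ^ 2 := by
    intro ξ
    set Qs : EuclideanSpace ℝ (Fin d) → Fin d → ℝ := fun y => ∑ j, ξ j • P j y with hQdef
    have hQeq : ∀ y, (fun l => (∑ j, ξ j * gχ j y l) + ξ l) = Qs y := by
      intro y; funext l
      simp only [hQdef]
      rw [Finset.sum_apply]
      simp only [Pi.smul_apply, smul_eq_mul]
      rw [show (∑ j, ξ j * P j y l)
          = (∑ j, ξ j * gχ j y l) + ∑ j, ξ j * (Pi.single j 1 : Fin d → ℝ) l from by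
        rw [← Finset.sum_add_distrib]
        exact Finset.sum_congr rfl fun j _ => by rw [hPdef]; ring]
      congr 1
      simp [Pi.single_apply]
    have hbil : ∀ y, (a y).mulVec (Qs y) ⬝ᵥ Qs y
        = ∑ i, ∑ j, ξ i * (ξ j * ((a y).mulVec (P j y) ⬝ᵥ P i y)) :=
      fun y => aux_bilin (a y) ξ (fun j => P j y) (fun i => P i y)
    have hQint : Integrable (fun y => (a y).mulVec (Qs y) ⬝ᵥ Qs y) μ := by
      refine Integrable.congr (f := fun y => ∑ i, ∑ j, ξ i * (ξ j * ((a y).mulVec (P j y) ⬝ᵥ P i y))) ?_ ?_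
      · exact integrable_finset_sum _ fun i _ => integrable_finset_sum _ fun j _ =>
          (((hInt' j i).const_mul (ξ j)).const_mul (ξ i))
      · exact Filter.Eventually.of_forall fun y => (hbil y).symm
    have hIQQ : ∫ y, (a y).mulVec (Qs y) ⬝ᵥ Qs y ∂μ = ∑ i, ∑ j, ξ i * (ξ j * a0 i j) := by
      rw [integral_congr_ae (Filter.Eventually.of_forall hbil)]
      rw [integral_finset_sum _ (fun i _ => integrable_finset_sum _ fun j _ =>
        (((hInt' j i).const_mul (ξ j)).const_mul (ξ i)))]
      refine Finset.sum_congr rfl fun i _ => ?_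
      rw [integral_finset_sum _ (fun j _ => (((hInt' j i).const_mul (ξ j)).const_mul (ξ i)))]
      refine Finset.sum_congr rfl fun j _ => ?_
      rw [integral_const_mul, integral_const_mul, key i j]
    have hquad : ξ ⬝ᵥ a0.mulVec ξ = ∑ i, ∑ j, ξ i * (ξ j * a0 i j) := by
      simp only [dotProduct, Matrix.mulVec, Finset.mul_sum]
      exact Finset.sum_congr rfl fun i _ => Finset.sum_congr rfl fun j _ => by ring
    have heq1 : ξ ⬝ᵥ a0.mulVec ξ = ∫ y, (a y).mulVec (Qs y) ⬝ᵥ Qs y ∂μ := by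
      rw [hquad, hIQQ]
    -- lower bound pieces
    have hQm : ∀ l, Measurable fun y => Qs y l := by
      intro l
      have hq : (fun y => Qs y l) = fun y => ∑ j, ξ j * P j y l := by
        funext y; simp only [hQdef]; rw [Finset.sum_apply]; simp
      rw [hq]
      exact Finset.measurable_sum _ fun j _ => ((hPm j l).const_mul _)
    have hQsq_int : ∀ l, Integrable (fun y => (Qs y l)^2) μ := by
      intro l
      refine aux_int_dom (hQint.const_mul α⁻¹) ((hQm l).pow_const 2) ?_
      intro y
      have h1 : α * (∑ k, (Qs y k)^2) ≤ (a y).mulVec (Qs y) ⬝ᵥ Qs y := by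
        rw [dotProduct_comm]; exact (hbd y (Qs y)).1
      have h2 : (Qs y l)^2 ≤ ∑ k, (Qs y k)^2 :=
        Finset.single_le_sum (f := fun k => (Qs y k)^2) (fun k _ => sq_nonneg _)
          (Finset.mem_univ l)
      rw [abs_of_nonneg (sq_nonneg _), inv_mul_eq_div, le_div_iff₀ hα]
      have h3 := mul_le_mul_of_nonneg_left h2 hα.le
      linarith [h1, h3, mul_comm α ((Qs y l)^2)]
    have hQl_int : ∀ l, Integrable (fun y => Qs y l) μ := by
      intro l
      refine aux_int_dom (((hQsq_int l).add (integrable_const 1)).const_mul (1/2)) (hQm l) ?_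
      intro y
      simp only [Pi.add_apply]
      nlinarith [sq_nonneg (|Qs y l| - 1), abs_nonneg (Qs y l), sq_abs (Qs y l)]
    have hgl_int : ∀ j l, Integrable (fun y => gχ j y l) μ := by
      intro j l
      refine aux_int_dom ((((hXint j).const_mul 2).add (integrable_const 3)).const_mul (1/2))
        (hgml j l) ?_
      intro y
      have h2 : (gχ j y l)^2 ≤ ∑ k, (gχ j y k)^2 :=
        Finset.single_le_sum (f := fun k => (gχ j y k)^2) (fun k _ => sq_nonneg _)
          (Finset.mem_univ l)
      have h3 := hsumg j y
      simp only [Pi.add_apply]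
      nlinarith [sq_nonneg (|gχ j y l| - 1), sq_abs (gχ j y l), abs_nonneg (gχ j y l)]
    have hmean : ∀ l, ∫ y, Qs y l ∂μ = ξ l := by
      intro l
      have hrw : (fun y => Qs y l) = fun y => (∑ j, ξ j * gχ j y l) + ξ l := by
        funext y; exact (congrFun (hQeq y) l).symm
      rw [hrw, integral_add (integrable_finset_sum _ fun j _ => (hgl_int j l).const_mul (ξ j))
        (integrable_const _)]
      rw [integral_finset_sum _ fun j _ => (hgl_int j l).const_mul (ξ j)]
      have hgz : ∀ j, ∫ y, gχ j y l ∂μ = 0 := by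
        intro j
        rw [hμ]
        exact meanzero l (χ j) (gχ j) (hgrad j) (hχper j) (by rw [← hμ]; exact hgl_int j l)
      have : ∀ j : Fin d, ∫ y, ξ j * gχ j y l ∂μ = 0 := by
        intro j; rw [integral_const_mul, hgz j, mul_zero]
      rw [Finset.sum_congr rfl fun j _ => this j]
      rw [Finset.sum_const_zero, zero_add, integral_const, measureReal_def, hμuniv, one_smul]
    have hvar : ∀ l, (ξ l)^2 ≤ ∫ y, (Qs y l)^2 ∂μ := by
      intro l
      have h0 : (0:ℝ) ≤ ∫ y, (Qs y l - ξ l)^2 ∂μ := integral_nonneg fun y => sq_nonneg _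
      have hexp : ∫ y, (Qs y l - ξ l)^2 ∂μ
          = (∫ y, (Qs y l)^2 ∂μ) - 2 * ξ l * (∫ y, Qs y l ∂μ)
            + (ξ l)^2 * (μ Set.univ).toReal := by
        have hfe : (fun y => (Qs y l - ξ l)^2)
            = fun y => ((Qs y l)^2 - (2 * ξ l) * Qs y l) + (ξ l)^2 := by
          funext y; ring
        rw [hfe]
        have i1 : Integrable (fun y => Qs y l ^ 2 - 2 * ξ l * Qs y l) μ :=
          (hQsq_int l).sub ((hQl_int l).const_mul (2 * ξ l))
        have i2 : Integrable (fun y => 2 * ξ l * Qs y l) μ := (hQl_int l).const_mul (2 * ξ l)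
        rw [integral_add i1 (integrable_const _), integral_sub (hQsq_int l) i2,
          integral_const_mul, integral_const, measureReal_def]
        simp only [smul_eq_mul]; ring
      rw [hexp, hmean l, hμuniv] at h0
      nlinarith [h0]
    have hlow : α * (∑ i, ξ i ^ 2) ≤ ξ ⬝ᵥ a0.mulVec ξ := by
      rw [heq1]
      have h1 : ∫ y, α * (∑ l, (Qs y l)^2) ∂μ ≤ ∫ y, (a y).mulVec (Qs y) ⬝ᵥ Qs y ∂μ := by
        refine integral_mono ((integrable_finset_sum _ fun l _ => hQsq_int l).const_mul α)
          hQint fun y => ?_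
        rw [dotProduct_comm]
        exact (hbd y (Qs y)).1
      have h2 : ∫ y, α * (∑ l, (Qs y l)^2) ∂μ = α * ∑ l, ∫ y, (Qs y l)^2 ∂μ := by
        rw [integral_const_mul, integral_finset_sum _ fun l _ => hQsq_int l]
      calc α * ∑ i, ξ i ^2 ≤ α * ∑ l, ∫ y, (Qs y l)^2 ∂μ :=
            mul_le_mul_of_nonneg_left (Finset.sum_le_sum fun l _ => hvar l) hα.le
        _ = ∫ y, α * (∑ l, (Qs y l)^2) ∂μ := h2.symm
        _ ≤ _ := h1
    -- upper bound pieces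
    set Gs : EuclideanSpace ℝ (Fin d) → Fin d → ℝ := fun y => ∑ j, ξ j • (fun l => gχ j y l) with hGdef
    have hGl : ∀ y l, Gs y l = ∑ j, ξ j * gχ j y l := by
      intro y l; simp only [hGdef]; rw [Finset.sum_apply]; simp
    have hGQ : ∀ y l, Qs y l = Gs y l + ξ l := by
      intro y l
      rw [hGl, ← congrFun (hQeq y) l]
    have hAQG : ∀ y, (a y).mulVec (Qs y) ⬝ᵥ Gs y
        = ∑ i, ∑ j, ξ i * (ξ j * ((a y).mulVec (P j y) ⬝ᵥ (fun l => gχ i y l))) :=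
      fun y => aux_bilin (a y) ξ (fun j => P j y) (fun i => fun l => gχ i y l)
    have hAQG_int : Integrable (fun y => (a y).mulVec (Qs y) ⬝ᵥ Gs y) μ := by
      refine Integrable.congr
        (f := fun y => ∑ i, ∑ j, ξ i * (ξ j * ((a y).mulVec (P j y) ⬝ᵥ (fun l => gχ i y l)))) ?_ ?_
      · exact integrable_finset_sum _ fun i _ => integrable_finset_sum _ fun j _ =>
          (((hIPg i j).const_mul (ξ j)).const_mul (ξ i))
      · exact Filter.Eventually.of_forall fun y => (hAQG y).symm
    have hAQG_zero : ∫ y, (a y).mulVec (Qs y) ⬝ᵥ Gs y ∂μ = 0 := by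
      rw [integral_congr_ae (Filter.Eventually.of_forall hAQG)]
      rw [integral_finset_sum _ (fun i _ => integrable_finset_sum _ fun j _ =>
        (((hIPg i j).const_mul (ξ j)).const_mul (ξ i)))]
      refine Finset.sum_eq_zero fun i _ => ?_
      rw [integral_finset_sum _ (fun j _ => (((hIPg i j).const_mul (ξ j)).const_mul (ξ i)))]
      refine Finset.sum_eq_zero fun j _ => ?_
      rw [integral_const_mul, integral_const_mul, hz i j, mul_zero, mul_zero]
    have hAxx_int : Integrable (fun y => ξ ⬝ᵥ (a y).mulVec ξ) μ := by
      refine aux_int_dom (integrable_const (β * ∑ i, ξ i ^ 2)) ?_ ?_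
      · have : (fun y => ξ ⬝ᵥ (a y).mulVec ξ) = fun y => (a y).mulVec ξ ⬝ᵥ ξ := by
          funext y; rw [dotProduct_comm]
        rw [this]
        exact hform _ _ (fun l => measurable_const) (fun l => measurable_const)
      · intro y
        rw [abs_of_nonneg (hpos y ξ)]
        exact (hbd y ξ).2
    have hupper_pt : ∀ y, (a y).mulVec (Qs y) ⬝ᵥ Qs y
        ≤ ξ ⬝ᵥ (a y).mulVec ξ + 2 * ((a y).mulVec (Qs y) ⬝ᵥ Gs y) := by
      intro y
      have hxi : (ξ : Fin d → ℝ) = Qs y - Gs y := by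
        funext l; rw [Pi.sub_apply, hGQ y l]; ring
      have s1 : Qs y ⬝ᵥ (a y).mulVec (Gs y) = Gs y ⬝ᵥ (a y).mulVec (Qs y) :=
        aux_dot_symm (hsym y) (Qs y) (Gs y)
      have s2 : (0:ℝ) ≤ Gs y ⬝ᵥ (a y).mulVec (Gs y) := hpos y (Gs y)
      rw [hxi, Matrix.mulVec_sub, dotProduct_sub, sub_dotProduct,
        sub_dotProduct]
      rw [dotProduct_comm ((a y).mulVec (Qs y)) (Qs y),
        dotProduct_comm ((a y).mulVec (Qs y)) (Gs y)]
      linarith [s1, s2]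
    have hupper : ξ ⬝ᵥ a0.mulVec ξ ≤ β * ∑ i, ξ i ^ 2 := by
      rw [heq1]
      have h1 : ∫ y, (a y).mulVec (Qs y) ⬝ᵥ Qs y ∂μ
          ≤ ∫ y, (ξ ⬝ᵥ (a y).mulVec ξ + 2 * ((a y).mulVec (Qs y) ⬝ᵥ Gs y)) ∂μ :=
        integral_mono hQint (hAxx_int.add (hAQG_int.const_mul 2)) hupper_pt
      rw [integral_add hAxx_int (hAQG_int.const_mul 2), integral_const_mul, hAQG_zero,
        mul_zero, add_zero] at h1
      have h2 : ∫ y, ξ ⬝ᵥ (a y).mulVec ξ ∂μ ≤ β * ∑ i, ξ i ^ 2 := by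
        refine le_trans (integral_mono hAxx_int (integrable_const _) fun y => (hbd y ξ).2) ?_
        rw [integral_const, measureReal_def, hμuniv, one_smul]
      linarith [h1, h2]
    have heq2 : (∫ y, ((a y).mulVec (fun l => (∑ j, ξ j * gχ j y l) + ξ l)) ⬝ᵥ
        (fun l => (∑ j, ξ j * gχ j y l) + ξ l) ∂μ) = ∫ y, (a y).mulVec (Qs y) ⬝ᵥ Qs y ∂μ :=
      integral_congr_ae (Filter.Eventually.of_forall fun y => by
        show ((a y).mulVec (fun l => (∑ j, ξ j * gχ j y l) + ξ l)) ⬝ᵥ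
          (fun l => (∑ j, ξ j * gχ j y l) + ξ l) = (a y).mulVec (Qs y) ⬝ᵥ Qs y
        rw [hQeq y])
    exact ⟨by rw [heq1, heq2], hlow, hupper⟩
  refine ⟨hsym0, ⟨α, β, le_refl α, hαβ, le_refl β, fun ξ => ⟨(master ξ).2.1, (master ξ).2.2⟩⟩,
    fun ξ => ⟨(master ξ).1, (master ξ).2.1⟩⟩
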